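/- Let G be a connected finite simple graph with a weight function c: V(G) → ℝ≥0, and let N = ∑_{v∈V(G)} c(v). If c(v) ≥ 1 for all v ∈ V(G), then the weighted average eccentricity satisfies avec_c(G) ≤ avec(P_{⌈N⌉}), where P_{⌈N⌉} is the path on ⌈N⌉ vertices. -/

import Mathlib

open SimpleGraph

/-- The eccentricity of a vertex `v`: the maximum distance from `v` to a vertex of `G`. -/
noncomputable def eccent {V : Type*} (G : SimpleGraph V) (v : V) : ℕ :=
  sSup (Set.range (G.dist v))

/-- The average eccentricity of a finite graph `G`. -/
noncomputable def avec {V : Type*} (G : SimpleGraph V) : ℝ :=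
  (∑ᶠ v, (eccent G v : ℝ)) / (Nat.card V)

/-- `G` contains no cycle of length `m` as a (not necessarily induced) subgraph. -/
def CycleFree {V : Type*} (G : SimpleGraph V) (m : ℕ) : Prop :=
  ∀ ⦃v : V⦄ (w : G.Walk v v), w.IsCycle → w.length ≠ m

open Finset

/-- Sum of eccentricities of the path on `n` vertices. -/
def pbound (n : ℕ) : ℕ := ∑ i ∈ Finset.range n, max i (n - 1 - i)

lemma pbound_split (n : ℕ) :
    pbound n + (∑ i ∈ range ((n+1)/2), i) + (∑ i ∈ range ((n+1)/2), i)
      = ((n+1)/2) * (n-1) + ∑ i ∈ range n, i := by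
  have h2 : (n+1)/2 ≤ n := by omega
  have hsplit : pbound n = (∑ i ∈ range ((n+1)/2), max i (n-1-i))
      + ∑ i ∈ Finset.Ico ((n+1)/2) n, max i (n-1-i) := by
    rw [pbound, Finset.range_eq_Ico, ← Finset.sum_Ico_consecutive _ (Nat.zero_le _) h2,
      ← Finset.range_eq_Ico]
  have h1 : (∑ i ∈ range ((n+1)/2), max i (n-1-i)) = ∑ i ∈ range ((n+1)/2), (n-1-i) := by
    apply Finset.sum_congr rfl
    intro i hi
    simp only [Finset.mem_range] at hi
    omega
  have h3 : (∑ i ∈ Finset.Ico ((n+1)/2) n, max i (n-1-i)) = ∑ i ∈ Finset.Ico ((n+1)/2) n, i := by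
    apply Finset.sum_congr rfl
    intro i hi
    simp only [Finset.mem_Ico] at hi
    omega
  have h4 : (∑ i ∈ range ((n+1)/2), (n-1-i)) + ∑ i ∈ range ((n+1)/2), i
      = ((n+1)/2) * (n-1) := by
    rw [← Finset.sum_add_distrib]
    rw [Finset.sum_congr rfl (fun i hi => by simp only [Finset.mem_range] at hi; omega :
      ∀ i ∈ range ((n+1)/2), (n-1-i) + i = (n-1))]
    simp [mul_comm]
  have h5 : (∑ i ∈ range ((n+1)/2), i) + ∑ i ∈ Finset.Ico ((n+1)/2) n, i
      = ∑ i ∈ range n, i := by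
    rw [Finset.range_eq_Ico, Finset.range_eq_Ico, ← Finset.sum_Ico_consecutive _ (Nat.zero_le _) h2]
  rw [hsplit]
  omega

lemma pbound_closed (n : ℕ) : pbound n * 4 + n % 2 + 2*n = 3*n*n := by
  rcases Nat.eq_zero_or_pos n with rfl | hn
  · simp [pbound]
  have h := pbound_split n
  have g1 : (∑ i ∈ range ((n+1)/2), i) * 2 = ((n+1)/2) * ((n+1)/2 - 1) :=
    Finset.sum_range_id_mul_two _
  have g2 : (∑ i ∈ range n, i) * 2 = n * (n-1) := Finset.sum_range_id_mul_two _
  rcases Nat.even_or_odd n with ⟨t, ht⟩ | ⟨t, ht⟩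
  · have ht1 : 1 ≤ t := by omega
    have hh : (n+1)/2 = t := by omega
    rw [hh] at h g1
    subst ht
    rw [show (t+t) % 2 = 0 from by omega]
    zify [ht1, show (1:ℕ) ≤ t + t by omega] at h g1 g2 ⊢
    nlinarith [h, g1, g2]
  · have hh : (n+1)/2 = t + 1 := by omega
    rw [hh] at h g1
    subst ht
    rw [show (2*t+1) % 2 = 1 from by omega]
    zify [show (1:ℕ) ≤ 2*t+1 by omega, show (1:ℕ) ≤ t + 1 by omega] at h g1 g2 ⊢
    nlinarith [h, g1, g2]

/-- F1 : the step inequality for `pbound`. -/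
lemma pbound_step (k : ℕ) : pbound k + k + (k+1)/2 ≤ pbound (k+1) := by
  have h1 := pbound_closed k
  have h2 := pbound_closed (k+1)
  have h3 : 3*(k+1)*(k+1) = 3*(k*k) + 6*k + 3 := by ring
  have h4 : 3*k*k = 3*(k*k) := by ring
  rw [h3] at h2
  rw [h4] at h1
  omega

/-- F2 : `j*d - pbound j` is antitone for `j ≥ d+1` (stated additively in ℕ). -/
lemma pbound_mono (d n : ℕ) (hdn : d + 1 ≤ n) :
    ∀ m, n ≤ m → m * d + pbound n ≤ n * d + pbound m := by
  intro m
  induction m with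
  | zero => intro h; omega
  | succ j ihj =>
    intro hnm
    rcases Nat.lt_or_ge j n with hj | hj
    · have : n = j + 1 := by omega
      subst this
      omega
    · have h1 := ihj hj
      have h2 := pbound_step j
      have h3 : (j+1) * d = j * d + d := by ring
      omega

section EccBasic
variable {V : Type*} [Fintype V] (G : SimpleGraph V)

lemma dist_le_eccent (v u : V) : G.dist v u ≤ _root_.eccent G v :=
  le_csSup ((Set.finite_range _).bddAbove) ⟨u, rfl⟩

omit [Fintype V] in
lemma eccent_le {v : V} {k : ℕ} (h : ∀ u, G.dist v u ≤ k) : _root_.eccent G v ≤ k :=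
  haveI : Nonempty V := ⟨v⟩
  csSup_le (Set.range_nonempty _) (by rintro x ⟨u, rfl⟩; exact h u)

lemma exists_eccent (v : V) : ∃ u, G.dist v u = _root_.eccent G v := by
  haveI : Nonempty V := ⟨v⟩
  have : _root_.eccent G v ∈ Set.range (G.dist v) :=
    (Set.range_nonempty _).csSup_mem (Set.finite_range _)
  exact this

end EccBasic

section Geodesic
variable {V : Type*} {G : SimpleGraph V}

lemma dist_getVert_le (hG : G.Connected) {u w : V} (p : G.Walk u w) (i : ℕ) :
    G.dist u (p.getVert i) ≤ i := by
  induction p generalizing i with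
  | nil =>
    rw [SimpleGraph.Walk.getVert_of_length_le _ (by simp)]
    rw [SimpleGraph.dist_self]
    omega
  | @cons a b w h q ih =>
    match i with
    | 0 => simp [SimpleGraph.Walk.getVert]
    | (j+1) =>
      have h1 : G.dist a b ≤ 1 := by
        have := SimpleGraph.dist_le (SimpleGraph.Walk.cons h SimpleGraph.Walk.nil)
        simpa using this
      calc G.dist a ((SimpleGraph.Walk.cons h q).getVert (j+1))
          ≤ G.dist a b + G.dist b (q.getVert j) := by
            rw [SimpleGraph.Walk.getVert_cons_succ]; exact hG.dist_triangle
        _ ≤ 1 + j := by exact Nat.add_le_add h1 (ih j)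
        _ = j + 1 := by omega

/-- On a geodesic, the `i`-th vertex is at distance exactly `i` from the start and
`length - i` from the end. -/
lemma geodesic_getVert (hG : G.Connected) {u w : V} (p : G.Walk u w)
    (hp : p.length = G.dist u w) {i : ℕ} (hi : i ≤ p.length) :
    G.dist u (p.getVert i) = i ∧ G.dist (p.getVert i) w = p.length - i := by
  have h1 : G.dist u (p.getVert i) ≤ i := dist_getVert_le hG p i
  have h2 : G.dist (p.getVert i) w ≤ p.length - i := by
    have := dist_getVert_le hG p.reverse (p.length - i)
    rw [SimpleGraph.Walk.getVert_reverse] at this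
    have hli : p.length - (p.length - i) = i := by omega
    rw [hli] at this
    rw [SimpleGraph.dist_comm]
    simpa using this
  have h3 : G.dist u w ≤ G.dist u (p.getVert i) + G.dist (p.getVert i) w := hG.dist_triangle
  omega

end Geodesic

section Induce
variable {V : Type*} {G : SimpleGraph V} {s : Set V}

/-- A walk staying inside `s` gives a walk of the induced subgraph. -/
lemma walk_to_induce : ∀ {v z : V} (p : G.Walk v z) (_ : ∀ x ∈ p.support, x ∈ s)
    (hv : v ∈ s) (hz : z ∈ s), ∃ q : (G.induce s).Walk ⟨v, hv⟩ ⟨z, hz⟩, q.length = p.length := by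
  intro v z p
  induction p with
  | nil =>
    intro _ hv hz
    exact ⟨SimpleGraph.Walk.nil, rfl⟩
  | @cons a b w h q ih =>
    intro hsup ha hw
    have hb : b ∈ s := hsup b (by simp [SimpleGraph.Walk.support_cons])
    obtain ⟨q', hq'⟩ := ih (fun x hx => hsup x (by simp [SimpleGraph.Walk.support_cons, hx])) hb hw
    refine ⟨SimpleGraph.Walk.cons (by exact h : (G.induce s).Adj ⟨a, ha⟩ ⟨b, hb⟩) q', ?_⟩
    exact congrArg (· + 1) hq'

/-- Distances in `G` are at most distances in an induced connected subgraph. -/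
lemma dist_le_induce_dist (hs : (G.induce s).Connected) {x y : V} (hx : x ∈ s) (hy : y ∈ s) :
    G.dist x y ≤ (G.induce s).dist ⟨x, hx⟩ ⟨y, hy⟩ := by
  obtain ⟨q, hq⟩ := hs.exists_walk_length_eq_dist ⟨x, hx⟩ ⟨y, hy⟩
  have := SimpleGraph.dist_le (q.map (SimpleGraph.Embedding.induce s).toHom)
  rwa [SimpleGraph.Walk.length_map, hq] at this

end Induce

section NonCut
variable {V : Type*} [Fintype V] {G : SimpleGraph V}

/-- Removing a vertex of maximum eccentricity keeps the graph connected. -/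
lemma induce_compl_connected (hG : G.Connected) (u : V)
    (hmax : ∀ v, _root_.eccent G v ≤ _root_.eccent G u) (hcard : 2 ≤ Fintype.card V) :
    (G.induce {x | x ≠ u}).Connected := by
  classical
  obtain ⟨w, hw⟩ := exists_eccent G u
  obtain ⟨v₀, hv₀⟩ := Fintype.exists_ne_of_one_lt_card (by omega) u
  have hd1 : 1 ≤ _root_.eccent G u := by
    have h1 : 0 < G.dist u v₀ := hG.pos_dist_of_ne (Ne.symm hv₀)
    have h2 := dist_le_eccent G u v₀
    omega
  have hwu : w ≠ u := by
    intro h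
    rw [h, SimpleGraph.dist_self] at hw
    omega
  have hws : w ∈ {x | x ≠ u} := hwu
  have key : ∀ x : {x | x ≠ u}, (G.induce {x | x ≠ u}).Reachable x ⟨w, hws⟩ := by
    intro x
    by_contra hnr
    obtain ⟨p, hp⟩ := hG.exists_walk_length_eq_dist ↑x w
    have hu : u ∈ p.support := by
      by_contra hu
      exact hnr (walk_to_induce p (fun z hz => by
        intro hzu; exact hu (hzu ▸ hz)) x.2 hws).choose.reachable
    have hsplit : (p.takeUntil u hu).length + (p.dropUntil u hu).length = p.length := by
      rw [← SimpleGraph.Walk.length_append, SimpleGraph.Walk.take_spec]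
    have h1 : G.dist ↑x u ≤ (p.takeUntil u hu).length := SimpleGraph.dist_le _
    have h2 : G.dist u w ≤ (p.dropUntil u hu).length := SimpleGraph.dist_le _
    have h3 : 0 < G.dist ↑x u := hG.pos_dist_of_ne x.2
    have h4 : G.dist ↑x w ≤ _root_.eccent G ↑x := dist_le_eccent G _ _
    have h5 := hmax ↑x
    omega
  haveI : Nonempty {x | x ≠ u} := ⟨⟨w, hws⟩⟩
  exact ⟨fun x y => (key x).trans (key y).symm⟩

end NonCut

universe u

/-- Core theorem: the total eccentricity of a connected graph on `n` vertices is at most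
that of the path on `n` vertices. -/
theorem core_EX : ∀ (n : ℕ) {V : Type u} [Fintype V] (G : SimpleGraph V), G.Connected →
    Fintype.card V = n → (∑ v, _root_.eccent G v) ≤ pbound n := by
  intro n
  induction n using Nat.strong_induction_on with
  | _ n ih =>
  intro V _ G hG hcard
  classical
  rcases Nat.lt_or_ge n 2 with hn2 | hn2
  · interval_cases n
    · haveI : IsEmpty V := Fintype.card_eq_zero_iff.mp hcard
      simp [pbound]
    · haveI : Subsingleton V := Fintype.card_le_one_iff_subsingleton.mp (by omega)
      have hz : ∀ v : V, _root_.eccent G v = 0 := by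
        intro v
        refine Nat.le_zero.mp (eccent_le G (fun z => ?_))
        rw [Subsingleton.elim z v, SimpleGraph.dist_self]
      simp [hz, pbound]
  · -- main case: n ≥ 2
    haveI : Nonempty V := Fintype.card_pos_iff.mp (by omega)
    obtain ⟨u, humem, hmaxu⟩ := Finset.exists_max_image Finset.univ (_root_.eccent G)
      ⟨Classical.arbitrary V, Finset.mem_univ _⟩
    have hmax : ∀ v, _root_.eccent G v ≤ _root_.eccent G u := fun v => hmaxu v (Finset.mem_univ v)
    set d := _root_.eccent G u with hd
    obtain ⟨w, hw⟩ := exists_eccent G u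
    obtain ⟨v₀, hv₀⟩ := Fintype.exists_ne_of_one_lt_card (by omega) u
    have hd1 : 1 ≤ d := by
      have h1 : 0 < G.dist u v₀ := hG.pos_dist_of_ne (Ne.symm hv₀)
      have h2 := dist_le_eccent G u v₀
      omega
    have hwu : w ≠ u := by
      intro h; rw [h, SimpleGraph.dist_self] at hw; omega
    have hGs : (G.induce {x | x ≠ u}).Connected := induce_compl_connected hG u hmax (by omega)
    have hcards : Fintype.card {x | x ≠ u} = n - 1 := by
      rw [Set.card_ne_eq, hcard]
    have hIH : (∑ x : {x | x ≠ u}, _root_.eccent (G.induce {x | x ≠ u}) x) ≤ pbound (n-1) :=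
      ih (n-1) (by omega) _ hGs hcards
    -- geodesic from u to w
    obtain ⟨p0, hp0⟩ := hG.exists_walk_length_eq_dist u w
    rw [hw] at hp0
    have hdn : d < n := by
      have := (SimpleGraph.Walk.isPath_of_length_eq_dist p0
        (by rw [hp0]; exact hw.symm)).length_lt
      omega
    -- the auxiliary function on V
    set F : V → ℕ := fun v => if h : v ≠ u then _root_.eccent (G.induce {x | x ≠ u}) ⟨v, h⟩ else 0
      with hF
    -- per-vertex bound
    have hpt : ∀ v ∈ Finset.univ.erase u,
        _root_.eccent G v ≤ F v + (if d < 2 * G.dist u v then 1 else 0) := by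
      intro v hv
      have hvne : v ≠ u := (Finset.mem_erase.mp hv).1
      have hFv : F v = _root_.eccent (G.induce {x | x ≠ u}) ⟨v, hvne⟩ := by
        rw [hF]; simp [hvne]
      rcases Nat.lt_or_ge d (2 * G.dist u v) with hB | hA
      · -- excess case : bound by e' + 1
        rw [if_pos hB, hFv]
        refine eccent_le G (fun z => ?_)
        rcases eq_or_ne z u with hzu | hzu
        · rw [hzu]
          have ht1 : 1 ≤ G.dist v u := hG.pos_dist_of_ne hvne
          obtain ⟨q, hq⟩ := hG.exists_walk_length_eq_dist v u
          obtain ⟨hy1, hy2⟩ := geodesic_getVert hG q hq (by omega : q.length - 1 ≤ q.length)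
          set y := q.getVert (q.length - 1) with hydef
          have hyu : y ≠ u := by
            intro h
            rw [h] at hy1
            omega
          have h2 : G.dist v y ≤ (G.induce {x | x ≠ u}).dist ⟨v, hvne⟩ ⟨y, hyu⟩ :=
            dist_le_induce_dist hGs hvne hyu
          have h3 := dist_le_eccent (G.induce {x | x ≠ u}) ⟨v, hvne⟩ ⟨y, hyu⟩
          omega
        · have h2 : G.dist v z ≤ (G.induce {x | x ≠ u}).dist ⟨v, hvne⟩ ⟨z, hzu⟩ :=
            dist_le_induce_dist hGs hvne hzu
          have h3 := dist_le_eccent (G.induce {x | x ≠ u}) ⟨v, hvne⟩ ⟨z, hzu⟩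
          omega
      · -- no excess
        rw [if_neg (by omega), hFv, Nat.add_zero]
        refine eccent_le G (fun z => ?_)
        rcases eq_or_ne z u with hzu | hzu
        · rw [hzu]
          have h1 : d ≤ G.dist u v + G.dist v w := by
            rw [hd, ← hw]; exact hG.dist_triangle
          have h2 : G.dist v w ≤ (G.induce {x | x ≠ u}).dist ⟨v, hvne⟩ ⟨w, hwu⟩ :=
            dist_le_induce_dist hGs hvne hwu
          have h3 := dist_le_eccent (G.induce {x | x ≠ u}) ⟨v, hvne⟩ ⟨w, hwu⟩
          have h4 : G.dist v u = G.dist u v := SimpleGraph.dist_comm ..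
          omega
        · have h2 : G.dist v z ≤ (G.induce {x | x ≠ u}).dist ⟨v, hvne⟩ ⟨z, hzu⟩ :=
            dist_le_induce_dist hGs hvne hzu
          have h3 := dist_le_eccent (G.induce {x | x ≠ u}) ⟨v, hvne⟩ ⟨z, hzu⟩
          omega
    -- counting the excess vertices
    have hcount : ((Finset.univ.erase u).filter (fun v => d < 2 * G.dist u v)).card
        ≤ (n - 1) - d / 2 := by
      have hpart := Finset.card_filter_add_card_filter_not
        (s := Finset.univ.erase u) (p := fun v => d < 2 * G.dist u v)
      have hinj : ∀ i ∈ Finset.Icc 1 (d/2), p0.getVert i ∈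
          (Finset.univ.erase u).filter (fun v => ¬ (d < 2 * G.dist u v)) := by
        intro i hi
        simp only [Finset.mem_Icc] at hi
        obtain ⟨hg1, hg2⟩ := geodesic_getVert hG p0
          (by rw [hp0]; exact hw.symm) (by omega : i ≤ p0.length)
        refine Finset.mem_filter.mpr ⟨Finset.mem_erase.mpr ⟨?_, Finset.mem_univ _⟩, by omega⟩
        intro h
        rw [h, SimpleGraph.dist_self] at hg1
        omega
      have hinj2 : Set.InjOn p0.getVert (Finset.Icc 1 (d/2)) := by
        intro i hi j hj hij
        simp only [Finset.coe_Icc, Set.mem_Icc] at hi hj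
        have hgi := (geodesic_getVert hG p0
          (by rw [hp0]; exact hw.symm) (by omega : i ≤ p0.length)).1
        have hgj := (geodesic_getVert hG p0
          (by rw [hp0]; exact hw.symm) (by omega : j ≤ p0.length)).1
        rw [← hgi, ← hgj, hij]
      have hc1 : d / 2 ≤
          ((Finset.univ.erase u).filter (fun v => ¬ (d < 2 * G.dist u v))).card := by
        have := Finset.card_le_card_of_injOn p0.getVert hinj hinj2
        simpa using this
      have hce : (Finset.univ.erase u).card = n - 1 := by
        rw [Finset.card_erase_of_mem (Finset.mem_univ u), Finset.card_univ, hcard]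
      omega
    -- assembling
    have hsum1 : (∑ v, _root_.eccent G v) = d + ∑ v ∈ Finset.univ.erase u, _root_.eccent G v :=
      (Finset.add_sum_erase _ _ (Finset.mem_univ u)).symm
    have hsum2 : (∑ v ∈ Finset.univ.erase u, _root_.eccent G v)
        ≤ (∑ v ∈ Finset.univ.erase u, F v)
          + ∑ v ∈ Finset.univ.erase u, (if d < 2 * G.dist u v then 1 else 0) := by
      rw [← Finset.sum_add_distrib]
      exact Finset.sum_le_sum hpt
    have hsum3 : (∑ v ∈ Finset.univ.erase u, F v)
        = ∑ x : {x | x ≠ u}, _root_.eccent (G.induce {x | x ≠ u}) x := by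
      rw [Finset.sum_subtype (p := fun x => x ∈ {x : V | x ≠ u}) (Finset.univ.erase u)
        (fun x => by simp [Finset.mem_erase]) F]
      apply Finset.sum_congr rfl
      intro x _
      show (if h : (↑x : V) ≠ u then _root_.eccent (G.induce {x | x ≠ u}) ⟨↑x, h⟩ else 0)
        = _root_.eccent (G.induce {x | x ≠ u}) x
      exact dif_pos x.2
    have hsum4 : (∑ v ∈ Finset.univ.erase u, (if d < 2 * G.dist u v then 1 else 0))
        = ((Finset.univ.erase u).filter (fun v => d < 2 * G.dist u v)).card := by
      rw [Finset.card_filter]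
    have hstep := pbound_step (n-1)
    have hn1 : n - 1 + 1 = n := by omega
    rw [hn1] at hstep
    omega

section PathGraph

lemma pathGraph_conn {m : ℕ} (hm : 0 < m) : (pathGraph m).Connected := by
  obtain ⟨k, rfl⟩ : ∃ k, m = k + 1 := ⟨m - 1, by omega⟩
  exact pathGraph_connected k

lemma pathGraph_dist_le {m : ℕ} (hm : 0 < m) :
    ∀ (k : ℕ) (a b : Fin m), b.val = a.val + k → (pathGraph m).dist a b ≤ k := by
  intro k
  induction k with
  | zero =>
    intro a b hab
    have : a = b := Fin.ext (by omega)
    rw [this, SimpleGraph.dist_self]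
  | succ j ihj =>
    intro a b hab
    have hc : a.val + 1 < m := by have := b.isLt; omega
    set c : Fin m := ⟨a.val + 1, hc⟩ with hcdef
    have hadj : (pathGraph m).Adj a c := by
      rw [pathGraph_adj]
      left; rfl
    have h1 : (pathGraph m).dist a c ≤ 1 := by
      have := SimpleGraph.dist_le (SimpleGraph.Walk.cons hadj SimpleGraph.Walk.nil)
      simpa using this
    have h2 := ihj c b (by simp [hcdef]; omega)
    have h3 := (pathGraph_conn hm).dist_triangle (u := a) (v := c) (w := b)
    omega

lemma pathGraph_walk_ge {m : ℕ} : ∀ {a b : Fin m} (p : (pathGraph m).Walk a b),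
    b.val - a.val ≤ p.length ∧ a.val - b.val ≤ p.length := by
  intro a b p
  induction p with
  | nil => omega
  | @cons x y z h q ih =>
    rw [pathGraph_adj] at h
    rw [SimpleGraph.Walk.length_cons]
    omega

lemma pathGraph_eccent {m : ℕ} (hm : 0 < m) (a : Fin m) :
    _root_.eccent (pathGraph m) a = max a.val (m - 1 - a.val) := by
  haveI : Nonempty (Fin m) := ⟨⟨0, hm⟩⟩
  apply le_antisymm
  · apply csSup_le (Set.range_nonempty _)
    rintro x ⟨b, rfl⟩
    rcases le_or_gt a.val b.val with hab | hab
    · have h1 := pathGraph_dist_le hm (b.val - a.val) a b (by omega)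
      have := b.isLt
      omega
    · have h1 := pathGraph_dist_le hm (a.val - b.val) b a (by omega)
      rw [SimpleGraph.dist_comm] at h1
      have := b.isLt
      omega
  · have hb : BddAbove (Set.range ((pathGraph m).dist a)) := (Set.finite_range _).bddAbove
    have key : ∀ b : Fin m, b.val - a.val ≤ _root_.eccent (pathGraph m) a ∧
        a.val - b.val ≤ _root_.eccent (pathGraph m) a := by
      intro b
      have h1 : (pathGraph m).dist a b ≤ _root_.eccent (pathGraph m) a := le_csSup hb ⟨b, rfl⟩
      obtain ⟨p, hp⟩ := (pathGraph_conn hm).exists_walk_length_eq_dist a b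
      have h3 := pathGraph_walk_ge p
      rw [hp] at h3
      exact ⟨le_trans h3.1 h1, le_trans h3.2 h1⟩
    have k0 := key ⟨0, hm⟩
    have k1 := key ⟨m-1, by omega⟩
    have e0 : (⟨0, hm⟩ : Fin m).val = 0 := rfl
    have e1 : ∀ (h : m - 1 < m), (⟨m-1, h⟩ : Fin m).val = m - 1 := fun _ => rfl
    rw [e0] at k0
    rw [e1] at k1
    have := a.isLt
    omega

end PathGraph

theorem stmt_6 {V : Type*} [Fintype V] (G : SimpleGraph V) (hG : G.Connected)
    (c : V → ℝ) (hc : ∀ v, 1 ≤ c v) (N : ℝ) (hN : N = ∑ v, c v) :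
    (∑ v, c v * (eccent G v : ℝ)) / N ≤ avec (pathGraph ⌈N⌉₊) := by
  classical
  haveI : Nonempty V := hG.nonempty
  set n := Fintype.card V with hn
  have hn1 : 1 ≤ n := Fintype.card_pos
  have hNn : (n : ℝ) ≤ N := by
    rw [hN]
    calc (n : ℝ) = ∑ _v : V, (1:ℝ) := by simp [hn]
    _ ≤ ∑ v, c v := Finset.sum_le_sum (fun v _ => hc v)
  have hN0 : 0 < N := by
    have h1 : (1:ℝ) ≤ (n:ℝ) := by exact_mod_cast hn1
    linarith
  set m := ⌈N⌉₊ with hm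
  have hNm : N ≤ (m : ℝ) := Nat.le_ceil N
  have hnm : n ≤ m := by exact_mod_cast le_trans hNn hNm
  have hm1 : 0 < m := by omega
  have hmR : (0:ℝ) < m := by exact_mod_cast hm1
  -- the average eccentricity of the path graph
  have havec : avec (pathGraph m) = (pbound m : ℝ) / m := by
    rw [avec]
    have h1 : (∑ᶠ v : Fin m, (_root_.eccent (pathGraph m) v : ℝ)) = (pbound m : ℝ) := by
      rw [finsum_eq_sum_of_fintype]
      rw [Finset.sum_congr rfl (fun i _ => by rw [pathGraph_eccent hm1 i] :
        ∀ i ∈ Finset.univ, ((_root_.eccent (pathGraph m) i : ℝ))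
          = ((max i.val (m - 1 - i.val) : ℕ) : ℝ))]
      rw [← Nat.cast_sum]
      congr 1
      rw [pbound]
      exact Fin.sum_univ_eq_sum_range (fun i => max i (m - 1 - i)) m
    rw [h1]
    congr 1
    simp [Nat.card_eq_fintype_card]
  rw [havec]
  -- a vertex of maximum eccentricity
  obtain ⟨u, humem, hmaxu⟩ := Finset.exists_max_image Finset.univ (_root_.eccent G)
    ⟨Classical.arbitrary V, Finset.mem_univ _⟩
  set d := _root_.eccent G u with hd
  have hmax : ∀ v, _root_.eccent G v ≤ d := fun v => hmaxu v (Finset.mem_univ v)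
  obtain ⟨w, hw⟩ := exists_eccent G u
  obtain ⟨p0, hp0⟩ := hG.exists_walk_length_eq_dist u w
  have hdn : d < n := by
    have h1 := (SimpleGraph.Walk.isPath_of_length_eq_dist p0 hp0).length_lt
    rw [hp0, hw] at h1
    exact h1
  have hcore : (∑ v, _root_.eccent G v) ≤ pbound n := core_EX n G hG hn.symm
  have hmono : m * d + pbound n ≤ n * d + pbound m := pbound_mono d n (by omega) m hnm
  have hEd : ∀ v, (_root_.eccent G v : ℝ) ≤ (d:ℝ) := fun v => by exact_mod_cast hmax v
  have hc0 : ∀ v, (0:ℝ) ≤ c v := fun v => le_trans zero_le_one (hc v)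
  rw [div_le_div_iff₀ hN0 hmR]
  rcases le_or_gt ((m:ℝ) * d) ((pbound m : ℝ)) with hcase | hcase
  · -- small diameter case
    have h1 : (∑ v, c v * (_root_.eccent G v : ℝ)) ≤ N * d := by
      calc (∑ v, c v * (_root_.eccent G v : ℝ)) ≤ ∑ v, c v * (d:ℝ) :=
            Finset.sum_le_sum (fun v _ => mul_le_mul_of_nonneg_left (hEd v) (hc0 v))
      _ = N * d := by rw [hN, ← Finset.sum_mul]
    calc (∑ v, c v * (_root_.eccent G v : ℝ)) * m ≤ (N * d) * m := by
          apply mul_le_mul_of_nonneg_right h1 hmR.le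
    _ = N * ((m:ℝ) * d) := by ring
    _ ≤ N * (pbound m : ℝ) := by exact mul_le_mul_of_nonneg_left hcase hN0.le
    _ = (pbound m : ℝ) * N := by ring
  · -- large diameter case
    have h2 : (∑ v, c v * (_root_.eccent G v : ℝ))
        ≤ N * d - ((n:ℝ) * d - ((∑ v, _root_.eccent G v : ℕ) : ℝ)) := by
      have hpt : ∀ v ∈ Finset.univ, c v * (_root_.eccent G v : ℝ)
          ≤ c v * (d:ℝ) - ((d:ℝ) - (_root_.eccent G v : ℝ)) := by
        intro v _
        nlinarith [hc v, hEd v]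
      have h3 := Finset.sum_le_sum hpt
      have h4 : (∑ v, (c v * (d:ℝ) - ((d:ℝ) - (_root_.eccent G v : ℝ))))
          = N * d - ((n:ℝ) * d - ((∑ v, _root_.eccent G v : ℕ) : ℝ)) := by
        rw [Finset.sum_sub_distrib, Finset.sum_sub_distrib, ← Finset.sum_mul, ← hN,
          Finset.sum_const, Nat.cast_sum]
        simp [hn, nsmul_eq_mul]
      rw [h4] at h3
      exact h3
    have h5 : (m:ℝ) * d - (pbound m : ℝ) ≤ (n:ℝ) * d - ((∑ v, _root_.eccent G v : ℕ) : ℝ) := by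
      have c1 : ((∑ v, _root_.eccent G v : ℕ) : ℝ) ≤ (pbound n : ℝ) := by exact_mod_cast hcore
      have c2 : (m:ℝ) * d + (pbound n : ℝ) ≤ (n:ℝ) * d + (pbound m : ℝ) := by
        exact_mod_cast hmono
      linarith
    have h6 : (∑ v, c v * (_root_.eccent G v : ℝ)) ≤ N * d - ((m:ℝ) * d - (pbound m : ℝ)) := by
      linarith
    have h7 : (0:ℝ) ≤ ((m:ℝ) - N) * ((m:ℝ) * d - (pbound m : ℝ)) :=
      mul_nonneg (by linarith) (by linarith)
    have h8 : (∑ v, c v * (_root_.eccent G v : ℝ)) * m ≤ (N * d - ((m:ℝ) * d - (pbound m : ℝ))) * m :=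
      mul_le_mul_of_nonneg_right h6 hmR.le
    nlinarith [h7, h8]
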